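/- (Quantitative Grover lower bound, abstract form of Theorem 1.) Let M, N, T be positive integers, f : Fin M → Fin N, and k : Fin T → ℕ. Let ψ₀ be a unit vector in EuclideanSpace ℂ (Fin M), let U_1, …, U_T be unitary operators on EuclideanSpace ℂ (Fin M), and for each x ∈ Fin N and t ∈ Fin T let S_{x,t} ⊆ Fin M be such that every z ∈ Fin M belongs to S_{x,t} for at most k_t values of x. Let P_{x,t} be the sign-flip operator of S_{x,t}, and define for each x the final state ψ_x = U_T P_{x,T} ⋯ U_1 P_{x,1} ψ₀. Define the average success probability p = N^{−1} ∑_{x ∈ Fin N} ∑_{z : f(z) = x} |ψ_x z|². Then N − 1 ≤ 2·√N · ∑_{t=1}^{T} √(k_t) + N·√(1 − p). In particular, if p is bounded below by a positive constant then ∑_t √(k_t) = Ω(√N). -/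

import Mathlib

lemma foldl_ofFn_eq {α : Type*} :
    ∀ (n : ℕ) (g : Fin n → α → α) (A : ℕ → α),
      (∀ i : Fin n, A (i + 1) = g i (A i)) →
      (List.ofFn g).foldl (fun v f => f v) (A 0) = A n := by
  intro n
  induction n with
  | zero => intro g A _; simp
  | succ n ih =>
    intro g A hs
    rw [List.ofFn_succ, List.foldl_cons]
    have h0 : g 0 (A 0) = A 1 := (hs 0).symm
    rw [h0]
    exact ih (fun i => g i.succ) (fun m => A (m + 1))
      (fun i => by simpa [Nat.succ_eq_add_one, add_comm, add_left_comm] using hs i.succ)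

lemma eunorm_sq {M : ℕ} (v : EuclideanSpace ℂ (Fin M)) :
    ‖v‖ ^ 2 = ∑ z, ‖v z‖ ^ 2 := by
  rw [EuclideanSpace.norm_eq, Real.sq_sqrt (by positivity)]

lemma masked_tri {M : ℕ} (A : Finset (Fin M)) (a b : EuclideanSpace ℂ (Fin M)) :
    Real.sqrt (∑ z ∈ A, ‖a z‖ ^ 2) ≤
      Real.sqrt (∑ z ∈ A, ‖b z‖ ^ 2) + ‖a - b‖ := by
  classical
  set u : EuclideanSpace ℂ (Fin M) := WithLp.toLp 2 (fun z => if z ∈ A then a z else 0) with hu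
  set w : EuclideanSpace ℂ (Fin M) := WithLp.toLp 2 (fun z => if z ∈ A then b z else 0) with hw
  have hmask : ∀ (c u' : EuclideanSpace ℂ (Fin M)),
      (∀ z, u' z = if z ∈ A then c z else 0) →
      ‖u'‖ = Real.sqrt (∑ z ∈ A, ‖c z‖ ^ 2) := by
    intro c u' h
    rw [EuclideanSpace.norm_eq]
    congr 1
    have e : ∀ z : Fin M, ‖u' z‖ ^ 2 = if z ∈ A then ‖c z‖ ^ 2 else 0 := by
      intro z; rw [h z]
      by_cases hz : z ∈ A <;> simp [hz]
    rw [Finset.sum_congr rfl fun z _ => e z, Finset.sum_ite_mem, Finset.univ_inter]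
  have hun : ‖u‖ = Real.sqrt (∑ z ∈ A, ‖a z‖ ^ 2) := hmask a u fun z => rfl
  have hwn : ‖w‖ = Real.sqrt (∑ z ∈ A, ‖b z‖ ^ 2) := hmask b w fun z => rfl
  have huw : ‖u - w‖ ≤ ‖a - b‖ := by
    rw [EuclideanSpace.norm_eq, EuclideanSpace.norm_eq]
    apply Real.sqrt_le_sqrt
    refine Finset.sum_le_sum fun z _ => ?_
    have h1 : (u - w) z = if z ∈ A then a z - b z else 0 := by
      rw [PiLp.sub_apply]
      show (if z ∈ A then a z else 0) - (if z ∈ A then b z else 0) = _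
      by_cases h : z ∈ A <;> simp [h]
    rw [h1, PiLp.sub_apply]
    by_cases h : z ∈ A <;> simp [h]
  calc Real.sqrt (∑ z ∈ A, ‖a z‖ ^ 2) = ‖u‖ := hun.symm
    _ ≤ ‖w‖ + ‖u - w‖ := by
        have := norm_add_le w (u - w); simpa using this
    _ ≤ Real.sqrt (∑ z ∈ A, ‖b z‖ ^ 2) + ‖a - b‖ := by
        rw [hwn]; exact add_le_add_right huw _

theorem groverLowerBound (M N T : ℕ) (hM : 0 < M) (hN : 0 < N) (hT : 0 < T)
    (f : Fin M → Fin N) (k : Fin T → ℕ)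
    (ψ₀ : EuclideanSpace ℂ (Fin M)) (hψ₀ : ‖ψ₀‖ = 1)
    (U : Fin T → (EuclideanSpace ℂ (Fin M) ≃ₗᵢ[ℂ] EuclideanSpace ℂ (Fin M)))
    (S : Fin N → Fin T → Finset (Fin M))
    (hk : ∀ (t : Fin T) (z : Fin M),
      (Finset.univ.filter fun x : Fin N => z ∈ S x t).card ≤ k t)
    (P : Fin N → Fin T → (EuclideanSpace ℂ (Fin M) →ₗ[ℂ] EuclideanSpace ℂ (Fin M)))
    (hP : ∀ (x : Fin N) (t : Fin T) (φ : EuclideanSpace ℂ (Fin M)) (z : Fin M),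
      P x t φ z = if z ∈ S x t then -φ z else φ z)
    (ψ : Fin N → EuclideanSpace ℂ (Fin M))
    (hψ : ∀ x, ψ x = (List.ofFn fun t : Fin T =>
        fun v : EuclideanSpace ℂ (Fin M) => U t (P x t v)).foldl (fun v f => f v) ψ₀)
    (p : ℝ)
    (hp : p = (N : ℝ)⁻¹ * ∑ x : Fin N,
        ∑ z ∈ Finset.univ.filter fun z : Fin M => f z = x, ‖ψ x z‖ ^ 2) :
    (N : ℝ) - 1 ≤ 2 * Real.sqrt N * (∑ t : Fin T, Real.sqrt (k t)) +
      (N : ℝ) * Real.sqrt (1 - p) := by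
  classical
  -- the ideal (oracle-free) evolution and the perturbed evolutions
  set Φ : ℕ → EuclideanSpace ℂ (Fin M) :=
    fun n => Nat.rec ψ₀ (fun m v => if h : m < T then U ⟨m, h⟩ v else v) n with hΦdef
  set Ψ : Fin N → ℕ → EuclideanSpace ℂ (Fin M) :=
    fun x n => Nat.rec ψ₀ (fun m v => if h : m < T then U ⟨m, h⟩ (P x ⟨m, h⟩ v) else v) n
    with hΨdef
  have hΦs : ∀ m, Φ (m + 1) = if h : m < T then U ⟨m, h⟩ (Φ m) else Φ m := fun m => rfl
  have hΨs : ∀ x m, Ψ x (m + 1) =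
      if h : m < T then U ⟨m, h⟩ (P x ⟨m, h⟩ (Ψ x m)) else Ψ x m := fun x m => rfl
  have hψT : ∀ x, ψ x = Ψ x T := by
    intro x
    rw [hψ x]
    exact foldl_ofFn_eq T (fun t v => U t (P x t v)) (Ψ x)
      (fun i => by rw [hΨs x i, dif_pos i.isLt])
  -- sign flips preserve norms
  have hPn : ∀ (x : Fin N) (t : Fin T) (w : EuclideanSpace ℂ (Fin M)), ‖P x t w‖ = ‖w‖ := by
    intro x t w
    rw [EuclideanSpace.norm_eq, EuclideanSpace.norm_eq]
    congr 1
    refine Finset.sum_congr rfl fun z _ => ?_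
    rw [hP]
    split <;> simp
  have hΦn : ∀ n, ‖Φ n‖ = 1 := by
    intro n
    induction n with
    | zero => exact hψ₀
    | succ m ih =>
      rw [hΦs m]
      split_ifs with h
      · rw [LinearIsometryEquiv.norm_map]; exact ih
      · exact ih
  have hΨn : ∀ x n, ‖Ψ x n‖ = 1 := by
    intro x n
    induction n with
    | zero => exact hψ₀
    | succ m ih =>
      rw [hΨs x m]
      split_ifs with h
      · rw [LinearIsometryEquiv.norm_map, hPn]; exact ih
      · exact ih
  have hψn1 : ∀ x, ‖ψ x‖ = 1 := fun x => by rw [hψT x]; exact hΨn x T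
  -- the per-step disturbance
  set D : Fin N → ℕ → ℝ :=
    fun x m => if h : m < T then ‖P x ⟨m, h⟩ (Φ m) - Φ m‖ else 0 with hDdef
  have hDnn : ∀ x m, 0 ≤ D x m := by
    intro x m
    simp only [hDdef]
    split_ifs with h
    · exact norm_nonneg _
    · exact le_refl 0
  -- hybrid argument
  have key : ∀ x n, ‖Ψ x n - Φ n‖ ≤ ∑ m ∈ Finset.range n, D x m := by
    intro x n
    induction n with
    | zero => simp; exact sub_self ψ₀
    | succ m ih =>
      rw [Finset.sum_range_succ]
      by_cases h : m < T
      · have hDm : D x m = ‖P x ⟨m, h⟩ (Φ m) - Φ m‖ := by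
          simp only [hDdef]; rw [dif_pos h]
        have e1 : Ψ x (m + 1) - Φ (m + 1) = U ⟨m, h⟩ (P x ⟨m, h⟩ (Ψ x m) - Φ m) := by
          rw [hΨs x m, hΦs m, dif_pos h, dif_pos h, ← LinearIsometryEquiv.map_sub]
        calc ‖Ψ x (m + 1) - Φ (m + 1)‖ = ‖P x ⟨m, h⟩ (Ψ x m) - Φ m‖ := by
              rw [e1, LinearIsometryEquiv.norm_map]
          _ ≤ ‖P x ⟨m, h⟩ (Ψ x m) - P x ⟨m, h⟩ (Φ m)‖ + ‖P x ⟨m, h⟩ (Φ m) - Φ m‖ := by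
              simpa [dist_eq_norm] using
                dist_triangle (P x ⟨m, h⟩ (Ψ x m)) (P x ⟨m, h⟩ (Φ m)) (Φ m)
          _ = ‖Ψ x m - Φ m‖ + D x m := by rw [← map_sub, hPn, hDm]
          _ ≤ (∑ i ∈ Finset.range m, D x i) + D x m := add_le_add_left ih _
      · have hD0 : D x m = 0 := by simp only [hDdef]; rw [dif_neg h]
        rw [hΨs x m, hΦs m, dif_neg h, dif_neg h, hD0, add_zero]
        exact ih
  have hΦsum : ∀ n, ∑ z, ‖Φ n z‖ ^ 2 = 1 := by
    intro n
    have h1 := eunorm_sq (Φ n)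
    rw [hΦn n] at h1
    simpa using h1.symm
  -- squared disturbance bound
  have hDsq : ∀ (x : Fin N) (t : Fin T),
      (D x (t : ℕ)) ^ 2 = 4 * ∑ z ∈ S x t, ‖Φ (t : ℕ) z‖ ^ 2 := by
    intro x t
    have hlt : (t : ℕ) < T := t.isLt
    have hD : D x (t : ℕ) = ‖P x t (Φ (t : ℕ)) - Φ (t : ℕ)‖ := by
      simp only [hDdef]; rw [dif_pos hlt]
    rw [hD, eunorm_sq]
    have hz : ∀ z, ‖(P x t (Φ (t : ℕ)) - Φ (t : ℕ)) z‖ ^ 2 =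
        if z ∈ S x t then 4 * ‖Φ (t : ℕ) z‖ ^ 2 else 0 := by
      intro z
      have e : (P x t (Φ (t : ℕ)) - Φ (t : ℕ)) z =
          if z ∈ S x t then -(2 * Φ (t : ℕ) z) else 0 := by
        rw [PiLp.sub_apply, hP]
        split_ifs with h
        · ring
        · exact sub_self _
      rw [e]
      split_ifs with h
      · rw [norm_neg, norm_mul, Complex.norm_two]; ring
      · simp
    rw [Finset.sum_congr rfl fun z _ => hz z, Finset.sum_ite_mem, Finset.univ_inter,
      Finset.mul_sum]
  -- sum over x of squared disturbances
  have hDsum2 : ∀ t : Fin T, ∑ x, (D x (t : ℕ)) ^ 2 ≤ 4 * (k t : ℝ) := by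
    intro t
    calc ∑ x, (D x (t : ℕ)) ^ 2
        = ∑ x, 4 * ∑ z ∈ S x t, ‖Φ (t : ℕ) z‖ ^ 2 :=
          Finset.sum_congr rfl fun x _ => hDsq x t
      _ = 4 * ∑ x, ∑ z ∈ S x t, ‖Φ (t : ℕ) z‖ ^ 2 := by rw [Finset.mul_sum]
      _ = 4 * ∑ x, ∑ z, (if z ∈ S x t then ‖Φ (t : ℕ) z‖ ^ 2 else 0) := by
          congr 1
          refine Finset.sum_congr rfl fun x _ => ?_
          rw [Finset.sum_ite_mem, Finset.univ_inter]
      _ = 4 * ∑ z, ∑ x, (if z ∈ S x t then ‖Φ (t : ℕ) z‖ ^ 2 else 0) := by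
          rw [Finset.sum_comm]
      _ = 4 * ∑ z, ((Finset.univ.filter fun x : Fin N => z ∈ S x t).card : ℝ) *
            ‖Φ (t : ℕ) z‖ ^ 2 := by
          congr 1
          refine Finset.sum_congr rfl fun z _ => ?_
          rw [← Finset.sum_filter, Finset.sum_const, nsmul_eq_mul]
      _ ≤ 4 * ∑ z, (k t : ℝ) * ‖Φ (t : ℕ) z‖ ^ 2 := by
          have h4 : (0:ℝ) ≤ 4 := by norm_num
          apply mul_le_mul_of_nonneg_left _ h4
          refine Finset.sum_le_sum fun z _ => ?_
          apply mul_le_mul_of_nonneg_right _ (by positivity)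
          exact_mod_cast hk t z
      _ = 4 * (k t : ℝ) := by rw [← Finset.mul_sum, hΦsum]; ring
  -- Cauchy-Schwarz over x
  have hDsum : ∀ t : Fin T, ∑ x, D x (t : ℕ) ≤ 2 * Real.sqrt N * Real.sqrt (k t) := by
    intro t
    have hnn : 0 ≤ ∑ x, D x (t : ℕ) := Finset.sum_nonneg fun x _ => hDnn x _
    have h1 : (∑ x, D x (t : ℕ)) ^ 2 ≤ (N : ℝ) * (4 * (k t : ℝ)) := by
      calc (∑ x, D x (t : ℕ)) ^ 2 ≤ (Finset.univ.card : ℝ) * ∑ x, (D x (t : ℕ)) ^ 2 :=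
            sq_sum_le_card_mul_sum_sq
        _ = (N : ℝ) * ∑ x, (D x (t : ℕ)) ^ 2 := by
            rw [Finset.card_univ, Fintype.card_fin]
        _ ≤ (N : ℝ) * (4 * (k t : ℝ)) :=
            mul_le_mul_of_nonneg_left (hDsum2 t) (Nat.cast_nonneg N)
    calc ∑ x, D x (t : ℕ) = Real.sqrt ((∑ x, D x (t : ℕ)) ^ 2) := (Real.sqrt_sq hnn).symm
      _ ≤ Real.sqrt ((N : ℝ) * (4 * (k t : ℝ))) := Real.sqrt_le_sqrt h1
      _ = 2 * Real.sqrt N * Real.sqrt (k t) := by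
          rw [Real.sqrt_mul (Nat.cast_nonneg N), Real.sqrt_mul (by norm_num : (0:ℝ) ≤ 4),
            show (4 : ℝ) = 2 ^ 2 by norm_num, Real.sqrt_sq (by norm_num : (0:ℝ) ≤ 2)]
          ring
  -- total disturbance bound
  have htotal : ∑ x, ‖ψ x - Φ T‖ ≤ 2 * Real.sqrt N * ∑ t : Fin T, Real.sqrt (k t) := by
    calc ∑ x, ‖ψ x - Φ T‖ ≤ ∑ x, ∑ m ∈ Finset.range T, D x m :=
          Finset.sum_le_sum fun x _ => by rw [hψT x]; exact key x T
      _ = ∑ m ∈ Finset.range T, ∑ x, D x m := Finset.sum_comm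
      _ = ∑ t : Fin T, ∑ x, D x (t : ℕ) := (Fin.sum_univ_eq_sum_range _ T).symm
      _ ≤ ∑ t : Fin T, 2 * Real.sqrt N * Real.sqrt (k t) :=
          Finset.sum_le_sum fun t _ => hDsum t
      _ = 2 * Real.sqrt N * ∑ t : Fin T, Real.sqrt (k t) := by rw [Finset.mul_sum]
  -- success probabilities
  set q : Fin N → ℝ :=
    fun x => ∑ z ∈ Finset.univ.filter fun z : Fin M => f z = x, ‖Φ T z‖ ^ 2
    with hqdef
  set pr : Fin N → ℝ :=
    fun x => ∑ z ∈ Finset.univ.filter fun z : Fin M => f z = x, ‖ψ x z‖ ^ 2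
    with hprdef
  have hψsum : ∀ x, ∑ z, ‖ψ x z‖ ^ 2 = 1 := by
    intro x
    have h1 := eunorm_sq (ψ x)
    rw [hψn1 x] at h1
    simpa using h1.symm
  have hqsum : ∑ x, q x = 1 := by
    rw [Finset.sum_fiberwise_of_maps_to (fun z _ => Finset.mem_univ (f z))
      (fun z => ‖Φ T z‖ ^ 2)]
    exact hΦsum T
  have hqnn : ∀ x, 0 ≤ q x := fun x => Finset.sum_nonneg fun z _ => by positivity
  have hqle1 : ∀ x, q x ≤ 1 := by
    intro x
    rw [← hqsum]
    exact Finset.single_le_sum (fun y _ => hqnn y) (Finset.mem_univ x)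
  have hprnn : ∀ x, 0 ≤ pr x := fun x => Finset.sum_nonneg fun z _ => by positivity
  have hprle1 : ∀ x, pr x ≤ 1 := by
    intro x
    rw [← hψsum x]
    exact Finset.sum_le_sum_of_subset_of_nonneg (Finset.filter_subset _ _)
      (fun z _ _ => by positivity)
  -- per-x inequality
  have hxkey : ∀ x, Real.sqrt (1 - q x) ≤ Real.sqrt (1 - pr x) + ‖ψ x - Φ T‖ := by
    intro x
    set A : Finset (Fin M) := Finset.univ.filter fun z : Fin M => ¬ f z = x with hA
    have h1q : 1 - q x = ∑ z ∈ A, ‖Φ T z‖ ^ 2 := by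
      have h2 := Finset.sum_filter_add_sum_filter_not Finset.univ
        (fun z : Fin M => f z = x) (fun z => ‖Φ T z‖ ^ 2)
      rw [hΦsum T] at h2
      linarith
    have h1p : 1 - pr x = ∑ z ∈ A, ‖ψ x z‖ ^ 2 := by
      have h2 := Finset.sum_filter_add_sum_filter_not Finset.univ
        (fun z : Fin M => f z = x) (fun z => ‖ψ x z‖ ^ 2)
      rw [hψsum x] at h2
      linarith
    rw [h1q, h1p]
    have h3 := masked_tri A (Φ T) (ψ x)
    rwa [norm_sub_rev] at h3
  -- assembling
  have hprsum : ∑ x, pr x = (N : ℝ) * p := by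
    rw [hp, ← mul_assoc, mul_inv_cancel₀ (by exact_mod_cast hN.ne' : (N:ℝ) ≠ 0), one_mul]
  have hsqp : ∑ x, Real.sqrt (1 - pr x) ≤ (N : ℝ) * Real.sqrt (1 - p) := by
    have h1 : (∑ x, Real.sqrt (1 - pr x)) ^ 2 ≤ (N : ℝ) * ∑ x, (1 - pr x) := by
      calc (∑ x, Real.sqrt (1 - pr x)) ^ 2
          ≤ (Finset.univ.card : ℝ) * ∑ x, Real.sqrt (1 - pr x) ^ 2 :=
            sq_sum_le_card_mul_sum_sq
        _ = (N : ℝ) * ∑ x, (1 - pr x) := by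
            rw [Finset.card_univ, Fintype.card_fin]
            congr 1
            exact Finset.sum_congr rfl fun x _ =>
              Real.sq_sqrt (sub_nonneg.2 (hprle1 x))
    have h2 : ∑ x, (1 - pr x) = (N : ℝ) * (1 - p) := by
      rw [Finset.sum_sub_distrib, hprsum]
      simp
      ring
    have hnn : 0 ≤ ∑ x, Real.sqrt (1 - pr x) :=
      Finset.sum_nonneg fun x _ => Real.sqrt_nonneg _
    calc ∑ x, Real.sqrt (1 - pr x)
        = Real.sqrt ((∑ x, Real.sqrt (1 - pr x)) ^ 2) := (Real.sqrt_sq hnn).symm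
      _ ≤ Real.sqrt ((N : ℝ) * ((N : ℝ) * (1 - p))) := by
          apply Real.sqrt_le_sqrt
          rw [← h2]
          exact h1
      _ = (N : ℝ) * Real.sqrt (1 - p) := by
          rw [← mul_assoc, Real.sqrt_mul (by positivity), Real.sqrt_mul_self (Nat.cast_nonneg N)]
  have hlow : (N : ℝ) - 1 ≤ ∑ x, Real.sqrt (1 - q x) := by
    have e : ∑ x, (1 - q x) = (N : ℝ) - 1 := by
      rw [Finset.sum_sub_distrib, hqsum]
      simp
    calc (N : ℝ) - 1 = ∑ x, (1 - q x) := e.symm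
      _ ≤ ∑ x, Real.sqrt (1 - q x) := by
          refine Finset.sum_le_sum fun x _ => ?_
          have h0 : 0 ≤ 1 - q x := sub_nonneg.2 (hqle1 x)
          have h1 : 1 - q x ≤ 1 := by linarith [hqnn x]
          nlinarith [Real.sq_sqrt h0, Real.sqrt_le_one.2 h1, Real.sqrt_nonneg (1 - q x)]
  calc (N : ℝ) - 1 ≤ ∑ x, Real.sqrt (1 - q x) := hlow
    _ ≤ ∑ x, (Real.sqrt (1 - pr x) + ‖ψ x - Φ T‖) := Finset.sum_le_sum fun x _ => hxkey x
    _ = (∑ x, Real.sqrt (1 - pr x)) + ∑ x, ‖ψ x - Φ T‖ := Finset.sum_add_distrib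
    _ ≤ (N : ℝ) * Real.sqrt (1 - p) + 2 * Real.sqrt N * ∑ t : Fin T, Real.sqrt (k t) :=
        add_le_add hsqp htotal
    _ = 2 * Real.sqrt N * (∑ t : Fin T, Real.sqrt (k t)) + (N : ℝ) * Real.sqrt (1 - p) := by
        ring
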